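/- Let M be a structure with operations S : M → M, + : M × M → M, × : M × M → M and a distinguished subset N ⊆ M (the standard part), satisfying: (a) the axioms of Robinson's Q (S injective with nonzero values on appropriate elements, x + 0 = x, x + S y = S(x + y), x × 0 = 0, x × S y = (x × y) + x); (b) the restriction of + to (M ∖ N)² is injective into M ∖ N; (c) for every {+}-term t(x₀,…,xₗ) which is not a variable, and all tuples w⃗ from M ∖ N, t(w⃗) ≠ wᵢ for each i; (d) m + w = w + m for every standard m ∈ N and nonstandard w ∈ M ∖ N. Then for all x, y, z, w ∈ M, if (x + y)·(x + y) + x = (z + w)·(z + w) + z then x = z and y = w. -/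

import Mathlib

/-- Terms in the language {+}. -/
inductive AddTerm : Type
  | var : ℕ → AddTerm
  | add : AddTerm → AddTerm → AddTerm

/-- Evaluation of a {+}-term with respect to a binary operation and an assignment. -/
def AddTerm.eval {M : Type} (f : M → M → M) (ρ : ℕ → M) : AddTerm → M
  | .var n => ρ n
  | .add t s => f (t.eval f ρ) (s.eval f ρ)

/-- The variable i occurs in the term. -/
def AddTerm.Occurs (i : ℕ) : AddTerm → Prop
  | .var n => i = n
  | .add t s => t.Occurs i ∨ s.Occurs i

/-- Auxiliary: left-nested tower of additions `((A + u) + u) + ⋯ + u` (k additions). -/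
def towerE {M : Type} (add : M → M → M) : ℕ → M → M → M
  | 0, A, _ => A
  | k+1, A, u => add (towerE add k A u) u

/-- Auxiliary: the {+}-term corresponding to `towerE`. -/
def towerT : ℕ → AddTerm
  | 0 => .var 0
  | k+1 => .add (towerT k) (.var 1)

lemma towerT_ne_var (k n : ℕ) : towerT (k+1) ≠ .var n := by
  rw [towerT]; exact fun h => AddTerm.noConfusion h

lemma towerT_occurs : ∀ k, (towerT k).Occurs 0
  | 0 => rfl
  | k+1 => Or.inl (towerT_occurs k)

lemma towerT_eval {M : Type} (f : M → M → M) (ρ : ℕ → M) :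
    ∀ k, (towerT k).eval f ρ = towerE f k (ρ 0) (ρ 1)
  | 0 => rfl
  | k+1 => by
      show f ((towerT k).eval f ρ) (ρ 1) = f (towerE f k (ρ 0) (ρ 1)) (ρ 1)
      rw [towerT_eval f ρ k]

lemma towerE_shift {M : Type} (add : M → M → M) :
    ∀ (k : ℕ) (A u : M), towerE add k (add A u) u = add (towerE add k A u) u
  | 0, A, u => rfl
  | k+1, A, u => by
      show add (towerE add k (add A u) u) u = add (add (towerE add k A u) u) u
      rw [towerE_shift add k]

/-- A structure (M, 0, S, +, ×) satisfying the axioms of Robinson's Q, with standard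
part Nst = {Sⁿ(0) : n ∈ ℕ}, in which (b) + restricted to nonstandard elements is
injective into the nonstandard elements, (c) + is acyclic on nonstandard elements
(no {+}-term which is not a variable, evaluated at nonstandard elements, equals one
of its arguments), and (d) standard elements commute additively with nonstandard
ones, satisfies the pairing axiom Θ: (x+y)·(x+y) + x = (z+w)·(z+w) + z implies
x = z and y = w. -/
theorem theta_holds_in_tree_models {M : Type} (zero : M) (S : M → M)
    (add mul : M → M → M) (Nst : Set M)
    (hNst : Nst = {x | ∃ n : ℕ, x = S^[n] zero})
    (hQ1 : Function.Injective S)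
    (hQ2 : ∀ x, S x ≠ zero)
    (hQ3 : ∀ x, x = zero ∨ ∃ y, x = S y)
    (hQ4 : ∀ x, add x zero = x)
    (hQ5 : ∀ x y, add x (S y) = S (add x y))
    (hQ6 : ∀ x, mul x zero = zero)
    (hQ7 : ∀ x y, mul x (S y) = add (mul x y) x)
    (hb1 : ∀ a b, a ∉ Nst → b ∉ Nst → add a b ∉ Nst)
    (hb2 : ∀ a b c d, a ∉ Nst → b ∉ Nst → c ∉ Nst → d ∉ Nst →
      add a b = add c d → a = c ∧ b = d)
    (hc : ∀ t : AddTerm, (∀ n, t ≠ .var n) → ∀ ρ : ℕ → M, (∀ n, ρ n ∉ Nst) →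
      ∀ i, t.Occurs i → t.eval add ρ ≠ ρ i)
    (hd : ∀ m w, m ∈ Nst → w ∉ Nst → add m w = add w m) :
    ∀ x y z w : M,
      add (mul (add x y) (add x y)) x = add (mul (add z w) (add z w)) z →
      x = z ∧ y = w := by
  -- Basic facts about the standard part
  have hstd : ∀ n : ℕ, S^[n] zero ∈ Nst := fun n => by rw [hNst]; exact ⟨n, rfl⟩
  have hzero : zero ∈ Nst := hstd 0
  have hmem : ∀ e, e ∈ Nst → ∃ n : ℕ, e = S^[n] zero := fun e he => by
    rw [hNst] at he; exact he
  have hSns : ∀ e, e ∉ Nst → S e ∉ Nst := by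
    intro e he hSe
    obtain ⟨n, hn⟩ := hmem _ hSe
    cases n with
    | zero => exact hQ2 e hn
    | succ m =>
      rw [Function.iterate_succ_apply'] at hn
      exact he (by rw [hNst]; exact ⟨m, hQ1 hn⟩)
  have hSiter_ns : ∀ (k : ℕ) (e : M), e ∉ Nst → S^[k] e ∉ Nst := by
    intro k
    induction k with
    | zero => exact fun e he => he
    | succ n ih =>
      intro e he
      rw [Function.iterate_succ_apply']
      exact hSns _ (ih e he)
  have hpred : ∀ e, e ∉ Nst → ∃ e', e = S e' ∧ e' ∉ Nst := by
    intro e he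
    rcases hQ3 e with h0 | ⟨e', he'⟩
    · exact absurd (h0 ▸ hzero) he
    · refine ⟨e', he', fun h => he ?_⟩
      obtain ⟨n, hn⟩ := hmem _ h
      rw [hNst]
      exact ⟨n + 1, by rw [he', hn, Function.iterate_succ_apply']⟩
  have hadd_std : ∀ (e : M) (n : ℕ), add e (S^[n] zero) = S^[n] e := by
    intro e n
    induction n with
    | zero => exact hQ4 e
    | succ m ih =>
      rw [Function.iterate_succ_apply', hQ5, ih]
      exact (Function.iterate_succ_apply' S m e).symm
  have hstd_add : ∀ (n : ℕ) (e : M), e ∉ Nst → add (S^[n] zero) e = S^[n] e := by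
    intro n e he
    rw [hd _ _ (hstd n) he, hadd_std]
  have hiterinj : ∀ n m : ℕ, S^[n] zero = S^[m] zero → n = m := by
    intro n
    induction n with
    | zero =>
      intro m h
      cases m with
      | zero => rfl
      | succ k =>
        rw [Function.iterate_succ_apply'] at h
        exact absurd h.symm (hQ2 _)
    | succ k ih =>
      intro m h
      cases m with
      | zero =>
        rw [Function.iterate_succ_apply'] at h
        exact absurd h (hQ2 _)
      | succ l =>
        rw [Function.iterate_succ_apply', Function.iterate_succ_apply'] at h
        rw [ih l (hQ1 h)]
  have hmul_ns : ∀ a b, a ∉ Nst → b ∉ Nst → mul a b ∉ Nst := by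
    intro a b ha hb
    obtain ⟨b', hb', hb'n⟩ := hpred b hb
    rw [hb', hQ7]
    by_cases hN : mul a b' ∈ Nst
    · obtain ⟨p, hp⟩ := hmem _ hN
      rw [hp, hstd_add _ _ ha]
      exact hSiter_ns p a ha
    · exact hb1 _ _ hN ha
  have htowerE_ns : ∀ (k : ℕ) (A u : M), A ∉ Nst → u ∉ Nst → towerE add k A u ∉ Nst := by
    intro k
    induction k with
    | zero => exact fun A u hA _ => hA
    | succ n ih =>
      intro A u hA hu
      exact hb1 _ _ (ih A u hA hu) hu
  have htower_ne : ∀ (A u : M), A ∉ Nst → u ∉ Nst → ∀ k, towerE add (k+1) A u ≠ A := by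
    intro A u hA hu k h
    have key := hc (towerT (k+1)) (towerT_ne_var k) (fun i => if i = 0 then A else u)
      (fun n => by split <;> assumption) 0 (towerT_occurs (k+1))
    apply key
    rw [towerT_eval]
    simpa using h
  have hadd_ne : ∀ (A u : M), A ∉ Nst → u ∉ Nst → add A u ≠ A := by
    intro A u hA hu
    have := htower_ne A u hA hu 0
    simpa [towerE] using this
  have hmuliter : ∀ (e b : M) (j : ℕ), mul e (S^[j] b) = towerE add j (mul e b) e := by
    intro e b j
    induction j with
    | zero => rfl
    | succ n ih =>
      rw [Function.iterate_succ_apply', hQ7, ih]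
      rfl
  -- Lemma F: no nonstandard fixed points of S-iterates
  have hF : ∀ (k : ℕ) (e : M), e ∉ Nst → S^[k] e = e → k = 0 := by
    intro k e he hk
    cases k with
    | zero => rfl
    | succ j =>
      exfalso
      obtain ⟨t, ht, htn⟩ := hpred e he
      have htk : S^[j+1] t = t := by
        apply hQ1
        rw [← Function.iterate_succ_apply' S (j+1) t, Function.iterate_succ_apply, ← ht, hk, ht]
      have hkey : mul e t = towerE add (j+1) (mul e t) e := by
        conv_lhs => rw [← htk]
        rw [hmuliter]
      exact htower_ne (mul e t) e (hmul_ns e t he htn) he j hkey.symm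
  -- Lemma G
  have hG : ∀ (u v t s : M) (k : ℕ), u ∉ Nst → v ∉ Nst → s ∉ Nst →
      u = S^[k+1] v → u = S t → v = S s → mul u t = mul v s → False := by
    intro u v t s k hu hv hsn hk ht hs hPQ
    have hts : t = S^[k+1] s := by
      apply hQ1
      rw [← ht, hk, hs, ← Function.iterate_succ_apply S (k+1) s, ← Function.iterate_succ_apply' S (k+1) s]
    obtain ⟨s', hs', hs'n⟩ := hpred s hsn
    have hA : mul u t = towerE add (k+1) (mul u s) u := by rw [hts, hmuliter]
    have hexp : mul u s = add (mul u s') u := by rw [hs', hQ7]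
    have hBig : add (mul v s') v = add (towerE add (k+1) (mul u s') u) u := by
      rw [← hQ7, ← hs', ← hPQ, hA, hexp, towerE_shift]
    obtain ⟨_, hvu⟩ := hb2 _ _ _ _ (hmul_ns v s' hv hs'n) hv
      (htowerE_ns _ _ _ (hmul_ns u s' hu hs'n) hu) hu hBig
    rw [hvu] at hk
    exact Nat.succ_ne_zero k (hF (k+1) u hu hk.symm)
  -- Peel lemma
  have hpeel : ∀ (m : ℕ) (e f g : M), g ∉ Nst → S^[m] e = add f g →
      ∃ g₀, g₀ ∉ Nst ∧ g = S^[m] g₀ ∧ e = add f g₀ := by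
    intro m
    induction m with
    | zero => exact fun e f g hg h => ⟨g, hg, rfl, h⟩
    | succ n ih =>
      intro e f g hg h
      obtain ⟨g', hg'eq, hg'n⟩ := hpred g hg
      have h2 : S^[n] e = add f g' := by
        apply hQ1
        rw [← Function.iterate_succ_apply' S n e, h, hg'eq, hQ5]
      obtain ⟨g₀, h1, h2', h3⟩ := ih e f g' hg'n h2
      exact ⟨g₀, h1, by rw [hg'eq, h2']; exact (Function.iterate_succ_apply' S n g₀).symm, h3⟩
  -- standard part closure
  have hadd_mem : ∀ a b, a ∈ Nst → b ∈ Nst → add a b ∈ Nst := by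
    intro a b ha hb
    obtain ⟨m, hm⟩ := hmem a ha
    obtain ⟨n, hn⟩ := hmem b hb
    rw [hm, hn, hadd_std, ← Function.iterate_add_apply]
    exact hstd _
  have hmul_std : ∀ m n : ℕ, mul (S^[m] zero) (S^[n] zero) = S^[m*n] zero := by
    intro m n
    induction n with
    | zero => simpa using hQ6 _
    | succ k ih =>
      rw [Function.iterate_succ_apply', hQ7, ih, hadd_std, ← Function.iterate_add_apply]
      have : m + m * k = m * (k + 1) := by ring
      rw [this]
  -- a nonstandard sum gives a nonstandard element
  have hu_ns : ∀ x y : M, ¬(x ∈ Nst ∧ y ∈ Nst) → add x y ∉ Nst := by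
    intro x y hxy
    by_cases hx : x ∈ Nst
    · have hy : y ∉ Nst := fun hy => hxy ⟨hx, hy⟩
      obtain ⟨a, ha⟩ := hmem x hx
      rw [ha, hstd_add _ _ hy]
      exact hSiter_ns a y hy
    · by_cases hy : y ∈ Nst
      · obtain ⟨b, hb⟩ := hmem y hy
        rw [hb, hadd_std]
        exact hSiter_ns b x hx
      · exact hb1 _ _ hx hy
  -- the full pairing expression is nonstandard if (x,y) not both standard
  have hform_ns : ∀ x y : M, ¬(x ∈ Nst ∧ y ∈ Nst) →
      add (mul (add x y) (add x y)) x ∉ Nst := by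
    intro x y h
    set u := add x y with hu_def
    have hu : u ∉ Nst := hu_ns x y h
    obtain ⟨t, ht, htn⟩ := hpred _ hu
    have huu : mul u u = add (mul u t) u := by rw [ht, hQ7]
    rw [huu]
    have h2 : add (mul u t) u ∉ Nst := hb1 _ _ (hmul_ns _ _ hu htn) hu
    by_cases hx : x ∈ Nst
    · obtain ⟨a, ha⟩ := hmem x hx
      rw [ha, hadd_std]
      exact hSiter_ns a _ h2
    · exact hb1 _ _ h2 hx
  -- standard computation of the pairing expression
  have hS_add : ∀ (m : ℕ) (e f : M), S^[m] (add e f) = add e (S^[m] f) := by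
    intro m e f
    induction m with
    | zero => rfl
    | succ n ih =>
      rw [Function.iterate_succ_apply', ih, ← hQ5, Function.iterate_succ_apply' S n f]
  have hform_std : ∀ a b : ℕ,
      add (mul (add (S^[a] zero) (S^[b] zero)) (add (S^[a] zero) (S^[b] zero))) (S^[a] zero)
        = S^[a + (b+a)*(b+a)] zero := by
    intro a b
    have h1 : add (S^[a] zero) (S^[b] zero) = S^[b+a] zero := by
      rw [hadd_std, ← Function.iterate_add_apply]
    rw [h1, hmul_std, hadd_std, ← Function.iterate_add_apply]
  -- Main proof
  intro x y z w heq
  by_cases hL : x ∈ Nst ∧ y ∈ Nst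
  · -- all standard case
    obtain ⟨hx, hy⟩ := hL
    obtain ⟨a, ha⟩ := hmem x hx
    obtain ⟨b, hb⟩ := hmem y hy
    have hR : z ∈ Nst ∧ w ∈ Nst := by
      by_contra hR
      have h1 := hform_ns z w hR
      rw [← heq, ha, hb, hform_std] at h1
      exact h1 (hstd _)
    obtain ⟨hz, hw⟩ := hR
    obtain ⟨c, hcz⟩ := hmem z hz
    obtain ⟨d, hdw⟩ := hmem w hw
    rw [ha, hb, hcz, hdw, hform_std, hform_std] at heq
    have hE := hiterinj _ _ heq
    have h1 : b + a = d + c := by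
      rcases lt_trichotomy (b+a) (d+c) with hlt | hEq | hgt
      · exfalso; nlinarith [hE, hlt, Nat.mul_le_mul hlt hlt]
      · exact hEq
      · exfalso; nlinarith [hE, hgt, Nat.mul_le_mul hgt hgt]
    rw [h1] at hE
    have hac : a = c := Nat.add_right_cancel hE
    have hbd : b = d := by omega
    exact ⟨by rw [ha, hcz, hac], by rw [hb, hdw, hbd]⟩
  · -- nonstandard case
    have hR : ¬(z ∈ Nst ∧ w ∈ Nst) := by
      rintro ⟨hz, hw⟩
      have h1 := hform_ns x y hL
      obtain ⟨c, hcz⟩ := hmem z hz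
      obtain ⟨d, hdw⟩ := hmem w hw
      rw [heq, hcz, hdw, hform_std] at h1
      exact h1 (hstd _)
    set u := add x y with hu_def
    set v := add z w with hv_def
    have hu : u ∉ Nst := hu_ns x y hL
    have hv : v ∉ Nst := hu_ns z w hR
    obtain ⟨t, ht, htn⟩ := hpred _ hu
    obtain ⟨s, hs, hsn⟩ := hpred _ hv
    have huu : mul u u = add (mul u t) u := by rw [ht, hQ7]
    have hvv : mul v v = add (mul v s) v := by rw [hs, hQ7]
    rw [huu, hvv] at heq
    by_cases hx : x ∈ Nst
    · obtain ⟨a, ha⟩ := hmem x hx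
      rw [ha, hadd_std (add (mul u t) u) a, hS_add a (mul u t) u] at heq
      by_cases hz : z ∈ Nst
      · -- case (2,2')
        obtain ⟨c, hcz⟩ := hmem z hz
        rw [hcz, hadd_std (add (mul v s) v) c, hS_add c (mul v s) v] at heq
        obtain ⟨hPQ, hsv⟩ := hb2 _ _ _ _ (hmul_ns u t hu htn) (hSiter_ns a u hu)
          (hmul_ns v s hv hsn) (hSiter_ns c v hv) heq
        have hkey : u = v ∧ a = c := by
          rcases le_total a c with h | h
          · have h2 : u = S^[c - a] v := by
              apply hQ1.iterate a
              rw [hsv, ← Function.iterate_add_apply, Nat.add_sub_cancel' h]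
            rcases Nat.eq_zero_or_pos (c - a) with h0 | hposk
            · rw [h0, Function.iterate_zero_apply] at h2
              exact ⟨h2, by omega⟩
            · obtain ⟨k, hk⟩ : ∃ k, c - a = k + 1 := ⟨c - a - 1, by omega⟩
              rw [hk] at h2
              exact (hG u v t s k hu hv hsn h2 ht hs hPQ).elim
          · have h2 : v = S^[a - c] u := by
              apply hQ1.iterate c
              rw [← hsv, ← Function.iterate_add_apply, Nat.add_sub_cancel' h]
            rcases Nat.eq_zero_or_pos (a - c) with h0 | hposk
            · rw [h0, Function.iterate_zero_apply] at h2
              exact ⟨h2.symm, by omega⟩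
            · obtain ⟨k, hk⟩ : ∃ k, a - c = k + 1 := ⟨a - c - 1, by omega⟩
              rw [hk] at h2
              exact (hG v u s t k hv hu htn h2 hs ht hPQ.symm).elim
        obtain ⟨huv, hac⟩ := hkey
        have hy : y ∉ Nst := fun hy => hu (by rw [hu_def]; exact hadd_mem x y hx hy)
        have hw : w ∉ Nst := fun hw => hv (by rw [hv_def]; exact hadd_mem z w hz hw)
        have e1 : S^[a] y = u := by
          rw [hu_def, ha, hstd_add a y hy]
        have e2 : S^[c] w = v := by
          rw [hv_def, hcz, hstd_add c w hw]
        have hyw : y = w := by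
          apply hQ1.iterate a
          rw [e1, huv, ← e2, hac]
        exact ⟨by rw [ha, hcz, hac], hyw⟩
      · -- case (2,4'): impossible
        exfalso
        obtain ⟨hPQ, hz2⟩ := hb2 _ _ _ _ (hmul_ns u t hu htn) (hSiter_ns a u hu)
          (hb1 _ _ (hmul_ns v s hv hsn) hv) hz heq
        obtain ⟨t', ht', ht'n⟩ := hpred t htn
        have h3 : add (mul u t') u = add (mul v s) v := by
          rw [← hPQ, ht', hQ7]
        obtain ⟨_, huv⟩ := hb2 _ _ _ _ (hmul_ns u t' hu ht'n) hu
          (hmul_ns v s hv hsn) hv h3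
        have hts : t = s := by
          apply hQ1
          rw [← ht, ← hs, huv]
        rw [← huv, ← hts] at hPQ
        exact hadd_ne (mul u t) u (hmul_ns u t hu htn) hu hPQ.symm
    · by_cases hz : z ∈ Nst
      · -- case (4,2'): impossible
        exfalso
        obtain ⟨c, hcz⟩ := hmem z hz
        rw [hcz, hadd_std (add (mul v s) v) c, hS_add c (mul v s) v] at heq
        obtain ⟨hPQ, hx2⟩ := hb2 _ _ _ _ (hb1 _ _ (hmul_ns u t hu htn) hu) hx
          (hmul_ns v s hv hsn) (hSiter_ns c v hv) heq
        obtain ⟨s', hs', hs'n⟩ := hpred s hsn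
        have h3 : add (mul u t) u = add (mul v s') v := by
          rw [hPQ, hs', hQ7]
        obtain ⟨_, huv⟩ := hb2 _ _ _ _ (hmul_ns u t hu htn) hu
          (hmul_ns v s' hv hs'n) hv h3
        have hts : t = s := by
          apply hQ1
          rw [← ht, ← hs, huv]
        rw [huv, hts] at hPQ
        exact hadd_ne (mul v s) v (hmul_ns v s hv hsn) hv hPQ
      · -- case (4,4')
        obtain ⟨h1, hxz⟩ := hb2 _ _ _ _ (hb1 _ _ (hmul_ns u t hu htn) hu) hx
          (hb1 _ _ (hmul_ns v s hv hsn) hv) hz heq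
        obtain ⟨hPQ, huv⟩ := hb2 _ _ _ _ (hmul_ns u t hu htn) hu
          (hmul_ns v s hv hsn) hv h1
        refine ⟨hxz, ?_⟩
        have huv' : add x y = add x w := by
          have h4 : add x y = add z w := by rw [← hu_def, ← hv_def, huv]
          rw [← hxz] at h4
          exact h4
        by_cases hy : y ∈ Nst
        · by_cases hw : w ∈ Nst
          · obtain ⟨b, hby⟩ := hmem y hy
            obtain ⟨d, hdw⟩ := hmem w hw
            rw [hby, hdw, hadd_std, hadd_std] at huv'
            have hbd : b = d := by
              rcases le_total b d with h | h
              · have h2 : x = S^[d - b] x := by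
                  apply hQ1.iterate b
                  rw [huv', ← Function.iterate_add_apply, Nat.add_sub_cancel' h]
                have := hF (d - b) x hx h2.symm
                omega
              · have h2 : x = S^[b - d] x := by
                  apply hQ1.iterate d
                  rw [← huv', ← Function.iterate_add_apply, Nat.add_sub_cancel' h]
                have := hF (b - d) x hx h2.symm
                omega
            rw [hby, hdw, hbd]
          · obtain ⟨b, hby⟩ := hmem y hy
            rw [hby, hadd_std] at huv'
            obtain ⟨w₀, hw₀n, _, hxx⟩ := hpeel b x x w hw huv'
            exact (hadd_ne x w₀ hx hw₀n hxx.symm).elim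
        · by_cases hw : w ∈ Nst
          · obtain ⟨d, hdw⟩ := hmem w hw
            rw [hdw, hadd_std] at huv'
            obtain ⟨y₀, hy₀n, _, hxx⟩ := hpeel d x x y hy huv'.symm
            exact (hadd_ne x y₀ hx hy₀n hxx.symm).elim
          · exact (hb2 x y x w hx hy hx hw huv').2
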